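/- Let [μ], [ν] ∈ 𝔽ₙ be realized by a family P = {f₁,…,fₙ} of fuzzy sets at points x, y ∈ [0,1] respectively. Then [μ] ≤ [ν] in the forest order if and only if there exists a comparison map λ : [0,1] → [0,1] with λ(fᵢ(y)) = fᵢ(x) for all i ∈ {1,…,n}. -/

import Mathlib

open unitInterval

/-- The extended value sequence 0, μ(X_{sg(1)}), …, μ(X_{sg(n)}), 1. -/
def seq (n : ℕ) (μ : Fin n → I) (sg : Equiv.Perm (Fin n)) : Fin (n + 2) → I :=
  fun i =>
    if h0 : (i : ℕ) = 0 then 0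
    else if h : (i : ℕ) ≤ n then μ (sg ⟨(i : ℕ) - 1, by omega⟩) else 1

/-- μ ≡ₙ ν : some permutation sorts both, with identical equality/strictness pattern. -/
def nEquiv (n : ℕ) (μ ν : Fin n → I) : Prop :=
  ∃ sg : Equiv.Perm (Fin n),
    Monotone (seq n μ sg) ∧ Monotone (seq n ν sg) ∧
      ∀ i : Fin (n + 1),
        (seq n μ sg i.castSucc = seq n μ sg i.succ ↔
          seq n ν sg i.castSucc = seq n ν sg i.succ)

/-- The forest order on assignments: [μ] ≤ [ν] iff some permutation sorts both, the patterns
agree up to index k, and μ's relations are equalities afterwards. -/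
def leAssign (n : ℕ) (μ ν : Fin n → I) : Prop :=
  ∃ sg : Equiv.Perm (Fin n),
    Monotone (seq n μ sg) ∧ Monotone (seq n ν sg) ∧
      ∃ k : ℕ, k ≤ n ∧
        (∀ i : Fin (n + 1), (i : ℕ) ≤ k →
          (seq n μ sg i.castSucc = seq n μ sg i.succ ↔
            seq n ν sg i.castSucc = seq n ν sg i.succ)) ∧
        (∀ i : Fin (n + 1), k < (i : ℕ) →
          seq n μ sg i.castSucc = seq n μ sg i.succ)

/-- A comparison map: monotone, fixes 0 and 1, and its restriction to [0, inf λ⁻¹(1)]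
is an order isomorphism onto [0,1]. -/
def IsComparisonMap (l : I → I) : Prop :=
  Monotone l ∧ l 0 = 0 ∧ l 1 = 1 ∧
    ∃ t : I, IsGLB (l ⁻¹' {1}) t ∧
      StrictMonoOn l (Set.Icc 0 t) ∧ l '' Set.Icc 0 t = Set.univ

/-- [μ] is realized by P = {f₁,…,fₙ} at x: the values fᵢ(x) share μ's order/equality pattern. -/
def realizedAt {n : ℕ} (f : Fin n → I → I) (μ : Fin n → I) (x : I) : Prop :=
  nEquiv n μ fun i => f i x

lemma seq_zero {n : ℕ} {μ : Fin n → I} {sg : Equiv.Perm (Fin n)} {i : Fin (n+2)}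
    (h : (i : ℕ) = 0) : seq n μ sg i = 0 := by simp [seq, h]

lemma seq_last {n : ℕ} {μ : Fin n → I} {sg : Equiv.Perm (Fin n)} {i : Fin (n+2)}
    (h : (i : ℕ) = n + 1) : seq n μ sg i = 1 := by
  simp only [seq]; rw [dif_neg (by omega), dif_neg (by omega)]

lemma seq_mid {n : ℕ} {μ : Fin n → I} {sg : Equiv.Perm (Fin n)} {i : Fin (n+2)}
    (h1 : 1 ≤ (i : ℕ)) (h2 : (i : ℕ) ≤ n) :
    seq n μ sg i = μ (sg ⟨(i : ℕ) - 1, by omega⟩) := by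
  simp only [seq]; rw [dif_neg (by omega), dif_pos h2]

lemma seq_mono_iff {n : ℕ} {μ : Fin n → I} {sg : Equiv.Perm (Fin n)} :
    Monotone (seq n μ sg) ↔ Monotone (μ ∘ ⇑sg) := by
  constructor
  · intro h j j' hle
    have h1 : seq n μ sg ⟨(j : ℕ) + 1, by omega⟩ ≤ seq n μ sg ⟨(j' : ℕ) + 1, by omega⟩ :=
      h (by simp [Fin.mk_le_mk]; omega)
    rwa [seq_mid (by simp) (by simp), seq_mid (by simp) (by simp),
      show (⟨(j : ℕ) + 1 - 1, by omega⟩ : Fin n) = j from by apply Fin.ext; simp,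
      show (⟨(j' : ℕ) + 1 - 1, by omega⟩ : Fin n) = j' from by apply Fin.ext; simp] at h1
  · intro h i i' hle
    by_cases hz : (i : ℕ) = 0
    · rw [seq_zero hz]; exact nonneg'
    · by_cases ht : (i' : ℕ) ≤ n
      · have hi : (i : ℕ) ≤ n := le_trans hle ht
        rw [seq_mid (by omega) hi, seq_mid (by omega) ht]
        exact h (by simp [Fin.mk_le_mk]; omega)
      · have := i'.isLt
        rw [seq_last (i := i') (by omega)]; exact le_one'

/-- walk along adjacent equalities -/
lemma walk {n : ℕ} (d : Fin n → I) (a b : ℕ) (hab : a ≤ b) (hb : b < n)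
    (hadj : ∀ m (_ : a ≤ m) (h2 : m + 1 ≤ b), d ⟨m, by omega⟩ = d ⟨m + 1, by omega⟩) :
    d ⟨a, by omega⟩ = d ⟨b, hb⟩ := by
  induction b with
  | zero =>
    have ha : a = 0 := by omega
    subst ha; rfl
  | succ b ih =>
    rcases eq_or_lt_of_le hab with h | h
    · subst h; rfl
    · have hab' : a ≤ b := by omega
      have := ih hab' (by omega) (fun m hm hm' => hadj m hm (by omega))
      rw [this]; exact hadj b (by omega) (by omega)

/-- ties of a monotone tuple transfer along adjacent-implications -/
lemma tie_two {n : ℕ} {c d : Fin n → I} (hc : Monotone c)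
    (hadj : ∀ m (h : m + 1 < n), c ⟨m, by omega⟩ = c ⟨m + 1, h⟩ → d ⟨m, by omega⟩ = d ⟨m + 1, h⟩)
    {p q : Fin n} (hpq : p ≤ q) (hcpq : c p = c q) : d p = d q := by
  have hq := q.isLt
  have hcadj : ∀ m (_ : (p : ℕ) ≤ m) (h2 : m + 1 ≤ (q : ℕ)),
      c ⟨m, by omega⟩ = c ⟨m + 1, by omega⟩ := by
    intro m hm hm'
    have l1 : c p ≤ c ⟨m, by omega⟩ := hc (by simp [Fin.le_def]; omega)
    have l2 : c ⟨m, by omega⟩ ≤ c ⟨m + 1, by omega⟩ := hc (by simp [Fin.le_def])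
    have l3 : c ⟨m + 1, by omega⟩ ≤ c q := hc (by simp [Fin.le_def]; omega)
    exact le_antisymm l2 (by rw [hcpq] at l1; exact le_trans l3 l1)
  have hdadj : ∀ m (_ : (p : ℕ) ≤ m) (h2 : m + 1 ≤ (q : ℕ)),
      d ⟨m, by omega⟩ = d ⟨m + 1, by omega⟩ := by
    intro m hm hm'
    exact hadj m (by omega) (hcadj m hm hm')
  have := walk d p q hpq q.isLt hdadj
  simpa using this

lemma seq_congr {n : ℕ} {v : Fin n → I} {s1 s2 : Equiv.Perm (Fin n)}
    (h : v ∘ ⇑s1 = v ∘ ⇑s2) : seq n v s1 = seq n v s2 := by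
  funext i
  by_cases hz : (i : ℕ) = 0
  · rw [seq_zero hz, seq_zero hz]
  · by_cases ht : (i : ℕ) ≤ n
    · rw [seq_mid (by omega) ht, seq_mid (by omega) ht]
      exact congrFun h _
    · have := i.isLt
      rw [seq_last (by omega), seq_last (by omega)]

lemma comp_unique {n : ℕ} {u : Fin n → I} {s1 s2 : Equiv.Perm (Fin n)}
    (h1 : Monotone (seq n u s1)) (h2 : Monotone (seq n u s2)) :
    u ∘ ⇑s1 = u ∘ ⇑s2 :=
  Tuple.unique_monotone (seq_mono_iff.mp h1) (seq_mono_iff.mp h2)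

lemma seq_unique {n : ℕ} {u : Fin n → I} {s1 s2 : Equiv.Perm (Fin n)}
    (h1 : Monotone (seq n u s1)) (h2 : Monotone (seq n u s2)) :
    seq n u s1 = seq n u s2 := seq_congr (comp_unique h1 h2)

/-- Key transfer: if `s1` sorts `u` and `v` with u-ties implying v-ties, then any other
permutation sorting `u` gives the same sorted `v`. -/
lemma tie_transfer {n : ℕ} {u v : Fin n → I} {s1 s2 : Equiv.Perm (Fin n)}
    (hu1 : Monotone (seq n u s1)) (hv1 : Monotone (seq n v s1))
    (hu2 : Monotone (seq n u s2))
    (himp : ∀ i : Fin (n+1), seq n u s1 i.castSucc = seq n u s1 i.succ →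
      seq n v s1 i.castSucc = seq n v s1 i.succ) :
    v ∘ ⇑s2 = v ∘ ⇑s1 := by
  have hcomp : u ∘ ⇑s1 = u ∘ ⇑s2 := comp_unique hu1 hu2
  have hcm : Monotone (u ∘ ⇑s1) := seq_mono_iff.mp hu1
  -- adjacent implication at the `Fin n` level
  have hadj : ∀ m (h : m + 1 < n), (u ∘ ⇑s1) ⟨m, by omega⟩ = (u ∘ ⇑s1) ⟨m + 1, h⟩ →
      (v ∘ ⇑s1) ⟨m, by omega⟩ = (v ∘ ⇑s1) ⟨m + 1, h⟩ := by
    intro m h hce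
    have hi : ((⟨m + 1, by omega⟩ : Fin (n+1)).castSucc : ℕ) = m + 1 := rfl
    have hmid1 : seq n u s1 (⟨m + 1, by omega⟩ : Fin (n+1)).castSucc = u (s1 ⟨m, by omega⟩) := by
      rw [seq_mid (by simp [Fin.castSucc]) (by simp [Fin.castSucc]; omega)]
      congr 1
    have hmid2 : seq n u s1 (⟨m + 1, by omega⟩ : Fin (n+1)).succ = u (s1 ⟨m + 1, by omega⟩) := by
      rw [seq_mid (by simp [Fin.succ]) (by simp [Fin.succ]; omega)]
      congr 1
    have hmid3 : seq n v s1 (⟨m + 1, by omega⟩ : Fin (n+1)).castSucc = v (s1 ⟨m, by omega⟩) := by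
      rw [seq_mid (by simp [Fin.castSucc]) (by simp [Fin.castSucc]; omega)]
      congr 1
    have hmid4 : seq n v s1 (⟨m + 1, by omega⟩ : Fin (n+1)).succ = v (s1 ⟨m + 1, by omega⟩) := by
      rw [seq_mid (by simp [Fin.succ]) (by simp [Fin.succ]; omega)]
      congr 1
    have := himp ⟨m + 1, by omega⟩ (by rw [hmid1, hmid2]; exact hce)
    rw [hmid3, hmid4] at this
    exact this
  funext j
  have hj : (u ∘ ⇑s1) (s1.symm (s2 j)) = (u ∘ ⇑s1) j := by
    simp only [Function.comp_apply, Equiv.apply_symm_apply]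
    exact (congrFun hcomp j).symm
  have key : (v ∘ ⇑s1) (s1.symm (s2 j)) = (v ∘ ⇑s1) j := by
    rcases le_total (s1.symm (s2 j)) j with hle | hle
    · exact tie_two hcm hadj hle hj
    · exact (tie_two hcm hadj hle hj.symm).symm
  simpa using key

/-! ### Piecewise linear interpolation -/

noncomputable def clamp (r : ℝ) : ℝ := max 0 (min 1 r)

lemma clamp_mono : Monotone clamp := fun _ _ h =>
  max_le_max le_rfl (min_le_min le_rfl h)

lemma clamp_nonneg (r : ℝ) : 0 ≤ clamp r := le_max_left _ _

lemma clamp_of_nonpos {r : ℝ} (h : r ≤ 0) : clamp r = 0 :=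
  max_eq_left ((min_le_right _ _).trans h)

lemma clamp_of_one_le {r : ℝ} (h : 1 ≤ r) : clamp r = 1 := by
  rw [clamp, min_eq_left h]; exact max_eq_right zero_le_one

lemma clamp_of_mem {r : ℝ} (h0 : 0 ≤ r) (h1 : r ≤ 1) : clamp r = r := by
  rw [clamp, min_eq_right h1]; exact max_eq_right h0

lemma clamp_continuous : Continuous clamp :=
  continuous_const.max (continuous_const.min continuous_id)

noncomputable def interp (n : ℕ) (A B : Fin (n + 2) → I) (z : ℝ) : ℝ :=
  ∑ p : Fin (n + 1), ((A p.succ : ℝ) - (A p.castSucc : ℝ)) *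
    clamp ((z - (B p.castSucc : ℝ)) / ((B p.succ : ℝ) - (B p.castSucc : ℝ)))

section Interp

variable {n : ℕ} {A B : Fin (n + 2) → I}

lemma dA_nonneg (hA : Monotone A) (p : Fin (n + 1)) :
    0 ≤ (A p.succ : ℝ) - (A p.castSucc : ℝ) := by
  have : A p.castSucc ≤ A p.succ := hA (Fin.castSucc_le_succ p)
  simpa using this

lemma dB_nonneg (hB : Monotone B) (p : Fin (n + 1)) :
    0 ≤ (B p.succ : ℝ) - (B p.castSucc : ℝ) := by
  have : B p.castSucc ≤ B p.succ := hB (Fin.castSucc_le_succ p)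
  simpa using this

lemma ratio_mono (hB : Monotone B) (p : Fin (n + 1)) {z1 z2 : ℝ} (h : z1 ≤ z2) :
    (z1 - (B p.castSucc : ℝ)) / ((B p.succ : ℝ) - (B p.castSucc : ℝ)) ≤
    (z2 - (B p.castSucc : ℝ)) / ((B p.succ : ℝ) - (B p.castSucc : ℝ)) := by
  rcases eq_or_lt_of_le (dB_nonneg hB p) with hd | hd
  · rw [← hd, div_zero, div_zero]
  · exact (div_le_div_iff_of_pos_right hd).mpr (by linarith)

lemma interp_mono (hA : Monotone A) (hB : Monotone B) : Monotone (interp n A B) := by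
  intro z1 z2 h
  apply Finset.sum_le_sum
  intro p _
  exact mul_le_mul_of_nonneg_left (clamp_mono (ratio_mono hB p h)) (dA_nonneg hA p)

lemma interp_nonneg (hA : Monotone A) (z : ℝ) : 0 ≤ interp n A B z :=
  Finset.sum_nonneg fun p _ => mul_nonneg (dA_nonneg hA p) (clamp_nonneg _)

lemma interp_continuous : Continuous (interp n A B) := by
  apply continuous_finset_sum
  intro p _
  exact continuous_const.mul
    (clamp_continuous.comp ((continuous_id.sub continuous_const).div_const _))

end Interp

section Interp2

variable {n : ℕ} {A B : Fin (n + 2) → I}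

lemma term_at (hA : Monotone A) (hB : Monotone B)
    (hBA : ∀ p : Fin (n + 1), B p.castSucc = B p.succ → A p.castSucc = A p.succ)
    (q : Fin (n + 2)) (p : Fin (n + 1)) :
    ((A p.succ : ℝ) - (A p.castSucc : ℝ)) *
      clamp (((B q : ℝ) - (B p.castSucc : ℝ)) / ((B p.succ : ℝ) - (B p.castSucc : ℝ))) =
    if (p : ℕ) < (q : ℕ) then (A p.succ : ℝ) - (A p.castSucc : ℝ) else 0 := by
  rcases eq_or_lt_of_le (dB_nonneg hB p) with hd | hd
  · -- flat B piece : dA = 0 as well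
    have hBeq : B p.castSucc = B p.succ := by
      have : (B p.castSucc : ℝ) = (B p.succ : ℝ) := by linarith
      exact Subtype.ext this
    have hAeq : (A p.succ : ℝ) - (A p.castSucc : ℝ) = 0 := by
      rw [hBA p hBeq]; ring
    rw [hAeq]; simp
  · by_cases hlt : (p : ℕ) < (q : ℕ)
    · -- full piece: B p.succ ≤ B q
      have hle : B p.succ ≤ B q := hB (by simp [Fin.le_def]; omega)
      have : (1 : ℝ) ≤ ((B q : ℝ) - (B p.castSucc : ℝ)) / ((B p.succ : ℝ) - (B p.castSucc : ℝ)) := by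
        rw [le_div_iff₀ hd]
        have : (B p.succ : ℝ) ≤ (B q : ℝ) := hle
        linarith
      rw [clamp_of_one_le this, if_pos hlt, mul_one]
    · -- empty piece: B q ≤ B p.castSucc
      have hle : B q ≤ B p.castSucc := hB (by simp [Fin.le_def]; omega)
      have : ((B q : ℝ) - (B p.castSucc : ℝ)) / ((B p.succ : ℝ) - (B p.castSucc : ℝ)) ≤ 0 := by
        apply div_nonpos_of_nonpos_of_nonneg _ (le_of_lt hd)
        have : (B q : ℝ) ≤ (B p.castSucc : ℝ) := hle
        linarith
      rw [clamp_of_nonpos this, if_neg hlt, mul_zero]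

lemma interp_at (hA : Monotone A) (hB : Monotone B)
    (hBA : ∀ p : Fin (n + 1), B p.castSucc = B p.succ → A p.castSucc = A p.succ)
    (q : Fin (n + 2)) :
    interp n A B (B q) = (A q : ℝ) - (A ⟨0, by omega⟩ : ℝ) := by
  have hq := q.isLt
  unfold interp
  rw [Finset.sum_congr rfl (fun p _ => term_at hA hB hBA q p)]
  set G : ℕ → ℝ := fun j => if j < (q : ℕ) then
      (A ⟨min (j + 1) (n + 1), by omega⟩ : ℝ) - (A ⟨min j (n + 1), by omega⟩ : ℝ) else 0
    with hG
  have hF : ∀ p : Fin (n + 1),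
      (if (p : ℕ) < (q : ℕ) then (A p.succ : ℝ) - (A p.castSucc : ℝ) else 0) = G (p : ℕ) := by
    intro p
    have hp := p.isLt
    rw [hG]
    simp only []
    by_cases h : (p : ℕ) < (q : ℕ)
    · rw [if_pos h, if_pos h]
      have e1 : (⟨min ((p : ℕ) + 1) (n + 1), by omega⟩ : Fin (n + 2)) = p.succ :=
        Fin.ext (by simp [Fin.succ, Nat.min_eq_left (by omega : (p : ℕ) + 1 ≤ n + 1)])
      have e2 : (⟨min (p : ℕ) (n + 1), by omega⟩ : Fin (n + 2)) = p.castSucc :=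
        Fin.ext (by simp [Fin.coe_castSucc, Nat.min_eq_left (by omega : (p : ℕ) ≤ n + 1)])
      rw [e1, e2]
    · rw [if_neg h, if_neg h]
  rw [Finset.sum_congr rfl (fun p _ => hF p), Fin.sum_univ_eq_sum_range G (n + 1)]
  have hsub : Finset.range (q : ℕ) ⊆ Finset.range (n + 1) := Finset.range_subset_range.mpr (by omega)
  have hvanish : ∀ x ∈ Finset.range (n + 1), x ∉ Finset.range (q : ℕ) → G x = 0 := by
    intro x _ hx
    rw [hG]
    simp only []
    rw [if_neg (by simp at hx; omega)]
  rw [← Finset.sum_subset hsub hvanish]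
  set F : ℕ → ℝ := fun j => (A ⟨min j (n + 1), by omega⟩ : ℝ) with hFdef
  have hGeq : ∀ j ∈ Finset.range (q : ℕ), G j = F (j + 1) - F j := by
    intro j hj
    rw [hG, hFdef]
    simp only []
    rw [if_pos (Finset.mem_range.mp hj)]
  rw [Finset.sum_congr rfl hGeq, Finset.sum_range_sub F]
  have e3 : (⟨min (q : ℕ) (n + 1), by omega⟩ : Fin (n + 2)) = q :=
    Fin.ext (by simp [Nat.min_eq_left (by omega : (q : ℕ) ≤ n + 1)])
  have e4 : (⟨min 0 (n + 1), by omega⟩ : Fin (n + 2)) = ⟨0, by omega⟩ := Fin.ext (by simp)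
  rw [hFdef]
  simp only []
  rw [e3, e4]

end Interp2

section Interp3

variable {n : ℕ} {A B : Fin (n + 2) → I}

lemma interp_strict (hA : Monotone A) (hB : Monotone B) (p : Fin (n + 1))
    (hd : (A p.castSucc : ℝ) < (A p.succ : ℝ)) {z1 z2 : ℝ}
    (hl : (B p.castSucc : ℝ) ≤ z1) (hr : z1 < (B p.succ : ℝ)) (hz : z1 < z2) :
    interp n A B z1 < interp n A B z2 := by
  apply Finset.sum_lt_sum
  · intro r _
    exact mul_le_mul_of_nonneg_left (clamp_mono (ratio_mono hB r (le_of_lt hz))) (dA_nonneg hA r)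
  · refine ⟨p, Finset.mem_univ p, ?_⟩
    have hdb : (0 : ℝ) < (B p.succ : ℝ) - (B p.castSucc : ℝ) := by linarith
    set r1 := (z1 - (B p.castSucc : ℝ)) / ((B p.succ : ℝ) - (B p.castSucc : ℝ)) with hr1
    set r2 := (z2 - (B p.castSucc : ℝ)) / ((B p.succ : ℝ) - (B p.castSucc : ℝ)) with hr2
    have h1 : 0 ≤ r1 := div_nonneg (by linarith) (le_of_lt hdb)
    have h2 : r1 < 1 := (div_lt_one hdb).mpr (by linarith)
    have h3 : r1 < r2 := by
      rw [hr1, hr2]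
      exact (div_lt_div_iff_of_pos_right hdb).mpr (by linarith)
    have hc1 : clamp r1 = r1 := clamp_of_mem h1 (le_of_lt h2)
    have hc2 : r1 < clamp r2 := by
      rcases le_total 1 r2 with h | h
      · rw [clamp_of_one_le h]; exact h2
      · rw [clamp_of_mem (le_trans h1 (le_of_lt h3)) h]; exact h3
    apply mul_lt_mul_of_pos_left _ (by linarith : (0:ℝ) < (A p.succ : ℝ) - (A p.castSucc : ℝ))
    rw [hc1]; exact hc2

end Interp3

/-- The construction of the comparison map from node data. -/
lemma exists_comparison {n : ℕ} (A B : Fin (n + 2) → I) (hA : Monotone A) (hB : Monotone B)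
    (hA0 : A ⟨0, by omega⟩ = 0) (hAl : A ⟨n + 1, by omega⟩ = 1)
    (hB0 : B ⟨0, by omega⟩ = 0) (hBl : B ⟨n + 1, by omega⟩ = 1)
    (hBA : ∀ p : Fin (n + 1), B p.castSucc = B p.succ → A p.castSucc = A p.succ)
    (hstrict : ∀ p : Fin (n + 1), A p.castSucc < 1 →
      A p.castSucc = A p.succ → B p.castSucc = B p.succ) :
    ∃ l : I → I, IsComparisonMap l ∧ ∀ q : Fin (n + 2), l (B q) = A q := by
  -- values of interp at the nodes
  have hat : ∀ q : Fin (n + 2), interp n A B (B q) = (A q : ℝ) := by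
    intro q
    rw [interp_at hA hB hBA q, hA0]
    simp
  -- bounds
  have hle1 : ∀ z : I, interp n A B z ≤ 1 := by
    intro z
    have h1 : interp n A B z ≤ interp n A B (B ⟨n + 1, by omega⟩) := by
      apply interp_mono hA hB
      rw [hBl]; exact z.2.2
    rw [hat, hAl] at h1
    exact_mod_cast h1
  -- the comparison map
  set l : I → I := fun z => ⟨interp n A B z, interp_nonneg hA z, hle1 z⟩ with hl
  have hlmono : Monotone l := fun z1 z2 h => by
    simp only [hl, Subtype.mk_le_mk]
    exact interp_mono hA hB (Subtype.coe_le_coe.mpr h)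
  have hlB : ∀ q : Fin (n + 2), l (B q) = A q := by
    intro q
    simp only [hl]
    exact Subtype.ext (hat q)
  have hl0 : l 0 = 0 := by
    have := hlB ⟨0, by omega⟩
    rwa [hB0, hA0] at this
  have hl1 : l 1 = 1 := by
    have := hlB ⟨n + 1, by omega⟩
    rwa [hBl, hAl] at this
  -- the threshold m₀ : least index with A = 1
  have hS : (Finset.univ.filter (fun p : Fin (n + 2) => A p = 1)).Nonempty :=
    ⟨⟨n + 1, by omega⟩, by simp [hAl]⟩
  set m0 : Fin (n + 2) := (Finset.univ.filter (fun p : Fin (n + 2) => A p = 1)).min' hS with hm0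
  have hm0mem : A m0 = 1 := by
    have := (Finset.univ.filter (fun p : Fin (n + 2) => A p = 1)).min'_mem hS
    simp only [Finset.mem_filter] at this
    exact this.2
  have hm0min : ∀ p : Fin (n + 2), p < m0 → A p < 1 := by
    intro p hp
    rcases lt_or_eq_of_le (le_one' : A p ≤ 1) with h | h
    · exact h
    · exfalso
      have : m0 ≤ p := Finset.min'_le _ _ (by simp [h])
      exact absurd hp (not_lt.mpr this)
  set t : I := B m0 with ht
  have hlt1 : l t = 1 := by rw [ht, hlB, hm0mem]
  -- strict monotonicity on [0, t]
  have hsm : StrictMonoOn l (Set.Icc 0 t) := by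
    intro z1 hz1 z2 hz2 h12
    -- find the largest node index below z1
    have hTn : (Finset.univ.filter (fun p : Fin (n + 2) => B p ≤ z1)).Nonempty :=
      ⟨⟨0, by omega⟩, by
        simp only [Finset.mem_filter, Finset.mem_univ, true_and]
        rw [hB0]; exact nonneg'⟩
    set qq : Fin (n + 2) := (Finset.univ.filter (fun p : Fin (n + 2) => B p ≤ z1)).max' hTn
      with hqq
    have hqmem : B qq ≤ z1 := by
      have := (Finset.univ.filter (fun p : Fin (n + 2) => B p ≤ z1)).max'_mem hTn
      simp only [Finset.mem_filter] at this
      exact this.2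
    have hz1t : z1 < t := lt_of_lt_of_le h12 hz2.2
    have hqm0 : qq < m0 := by
      by_contra hcon
      have : t ≤ B qq := hB (not_lt.mp hcon)
      exact absurd (lt_of_le_of_lt (le_trans this hqmem) hz1t) (lt_irrefl _)
    have hqlt : (qq : ℕ) < n + 1 := by
      have := m0.isLt
      have := Fin.lt_def.mp hqm0
      omega
    set p : Fin (n + 1) := ⟨(qq : ℕ), hqlt⟩ with hp
    have hpc : p.castSucc = qq := Fin.ext (by simp [hp])
    have hsuccgt : z1 < (B p.succ : ℝ) := by
      by_contra hcon
      push_neg at hcon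
      have hmem : p.succ ∈ Finset.univ.filter (fun r : Fin (n + 2) => B r ≤ z1) := by
        simp only [Finset.mem_filter, Finset.mem_univ, true_and]
        exact hcon
      have := Finset.le_max' _ _ hmem
      rw [← hqq] at this
      have : (p.succ : ℕ) ≤ (qq : ℕ) := this
      simp [hp] at this
    have hAlt : A p.castSucc < 1 := by rw [hpc]; exact hm0min qq hqm0
    have hAne : A p.castSucc ≠ A p.succ := by
      intro hcon
      have hBeq := hstrict p hAlt hcon
      rw [hpc] at hBeq
      rw [← hBeq] at hsuccgt
      exact absurd (lt_of_le_of_lt hqmem hsuccgt) (lt_irrefl _)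
    have hAstrict : (A p.castSucc : ℝ) < (A p.succ : ℝ) := by
      rcases lt_or_eq_of_le (hA (Fin.castSucc_le_succ p)) with h | h
      · exact_mod_cast h
      · exact absurd h hAne
    have : interp n A B z1 < interp n A B z2 :=
      interp_strict hA hB p hAstrict (by rw [hpc]; exact hqmem) hsuccgt h12
    exact this
  -- image of [0, t] is everything
  have himg : l '' Set.Icc 0 t = Set.univ := by
    apply Set.eq_univ_of_univ_subset
    intro w _
    have hcont : ContinuousOn (interp n A B) (Set.Icc (0 : ℝ) (t : ℝ)) :=
      interp_continuous.continuousOn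
    have h0r : interp n A B (0 : ℝ) = 0 := by
      have := hat ⟨0, by omega⟩
      rw [hB0, hA0] at this
      simpa using this
    have htr : interp n A B (t : ℝ) = 1 := by
      have := hat m0
      rw [← ht, hm0mem] at this
      simpa using this
    have hsub := intermediate_value_Icc (t.2.1 : (0 : ℝ) ≤ (t : ℝ)) hcont
    rw [h0r, htr] at hsub
    obtain ⟨z, hz, hzw⟩ := hsub ⟨w.2.1, w.2.2⟩
    refine ⟨⟨z, hz.1, le_trans hz.2 t.2.2⟩, ⟨?_, ?_⟩, ?_⟩
    · exact hz.1
    · exact Subtype.coe_le_coe.mp hz.2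
    · exact Subtype.ext hzw
  -- greatest lower bound property
  have hglb : IsGLB (l ⁻¹' {1}) t := by
    apply IsLeast.isGLB
    constructor
    · exact hlt1
    · intro s hs
      by_contra hcon
      push_neg at hcon
      have hs1 : l s = 1 := hs
      have : l s < l t := hsm ⟨nonneg', le_of_lt hcon⟩ ⟨nonneg', le_rfl⟩ hcon
      rw [hlt1, hs1] at this
      exact absurd this (lt_irrefl _)
  exact ⟨l, ⟨hlmono, hl0, hl1, t, hglb, hsm, himg⟩, hlB⟩

lemma seq_index {n : ℕ} (X : Fin n → I) (sg : Equiv.Perm (Fin n)) (i : Fin n) :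
    seq n X sg ⟨((sg.symm i : Fin n) : ℕ) + 1, by have := (sg.symm i).isLt; omega⟩ = X i := by
  have h := (sg.symm i).isLt
  rw [seq_mid (by simp) (by simp)]
  have e : (⟨((sg.symm i : Fin n) : ℕ) + 1 - 1, by omega⟩ : Fin n) = sg.symm i :=
    Fin.ext (by simp)
  rw [e, Equiv.apply_symm_apply]

lemma fin_cast_eq {n : ℕ} (m : ℕ) (h : m < n + 1) :
    ((⟨m, h⟩ : Fin (n + 1)).castSucc : Fin (n + 2)) = ⟨m, by omega⟩ := Fin.ext rfl

lemma fin_succ_eq {n : ℕ} (m : ℕ) (h : m < n + 1) :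
    ((⟨m, h⟩ : Fin (n + 1)).succ : Fin (n + 2)) = ⟨m + 1, by omega⟩ := Fin.ext rfl

/-- if all adjacent relations from index `p` on are equalities, then `A p.castSucc = A last` -/
lemma tail_eq_one {n : ℕ} {A : Fin (n + 2) → I} {k : ℕ}
    (h : ∀ i : Fin (n + 1), k < (i : ℕ) → A i.castSucc = A i.succ)
    {p : Fin (n + 1)} (hp : k < (p : ℕ)) :
    A p.castSucc = A ⟨n + 1, by omega⟩ := by
  have hplt := p.isLt
  have hw := walk A (p : ℕ) (n + 1) (by omega) (by omega) (fun m hm hm' => by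
    have h1 := h ⟨m, by omega⟩ (by show k < m; omega)
    rwa [fin_cast_eq m (by omega), fin_succ_eq m (by omega)] at h1)
  rw [← fin_cast_eq (p : ℕ) p.isLt] at hw
  simpa using hw


theorem le_iff_comparisonMap {n : ℕ} (f : Fin n → I → I) (μ ν : Fin n → I) (x y : I)
    (hμ : realizedAt f μ x) (hν : realizedAt f ν y) :
    leAssign n μ ν ↔
      ∃ l : I → I, IsComparisonMap l ∧ ∀ i, l (f i y) = f i x := by
  obtain ⟨s1, hμ1, hX1, hiff1⟩ := hμ
  obtain ⟨s2, hν2, hY2, hiff2⟩ := hν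
  constructor
  · rintro ⟨sg, hμm, hνm, k, hk, hle, hgt⟩
    have hXcomp : (fun i => f i x) ∘ ⇑sg = (fun i => f i x) ∘ ⇑s1 :=
      tie_transfer hμ1 hX1 hμm (fun i h => (hiff1 i).mp h)
    have hXseq : seq n (fun i => f i x) sg = seq n (fun i => f i x) s1 := seq_congr hXcomp
    have hXm : Monotone (seq n (fun i => f i x) sg) := by rw [hXseq]; exact hX1
    have hμseq : seq n μ sg = seq n μ s1 := seq_unique hμm hμ1
    have hYcomp : (fun i => f i y) ∘ ⇑sg = (fun i => f i y) ∘ ⇑s2 :=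
      tie_transfer hν2 hY2 hνm (fun i h => (hiff2 i).mp h)
    have hYseq : seq n (fun i => f i y) sg = seq n (fun i => f i y) s2 := seq_congr hYcomp
    have hYm : Monotone (seq n (fun i => f i y) sg) := by rw [hYseq]; exact hY2
    have hνseq : seq n ν sg = seq n ν s2 := seq_unique hνm hν2
    have hiffA : ∀ i : Fin (n + 1), (seq n (fun i => f i x) sg i.castSucc = seq n (fun i => f i x) sg i.succ ↔
        seq n μ sg i.castSucc = seq n μ sg i.succ) := by
      intro i
      rw [hXseq, hμseq]
      exact (hiff1 i).symm
    have hiffB : ∀ i : Fin (n + 1), (seq n (fun i => f i y) sg i.castSucc = seq n (fun i => f i y) sg i.succ ↔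
        seq n ν sg i.castSucc = seq n ν sg i.succ) := by
      intro i
      rw [hYseq, hνseq]
      exact (hiff2 i).symm
    have hBA : ∀ p : Fin (n + 1), seq n (fun i => f i y) sg p.castSucc = seq n (fun i => f i y) sg p.succ →
        seq n (fun i => f i x) sg p.castSucc = seq n (fun i => f i x) sg p.succ := by
      intro p h
      by_cases hpk : (p : ℕ) ≤ k
      · exact (hiffA p).mpr ((hle p hpk).mpr ((hiffB p).mp h))
      · exact (hiffA p).mpr (hgt p (by omega))
    have hstrict : ∀ p : Fin (n + 1), seq n (fun i => f i x) sg p.castSucc < 1 →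
        seq n (fun i => f i x) sg p.castSucc = seq n (fun i => f i x) sg p.succ → seq n (fun i => f i y) sg p.castSucc = seq n (fun i => f i y) sg p.succ := by
      intro p hlt1 hAeq
      by_cases hpk : (p : ℕ) ≤ k
      · exact (hiffB p).mpr ((hle p hpk).mp ((hiffA p).mp hAeq))
      · exfalso
        have h1 : seq n (fun i => f i x) sg p.castSucc = seq n (fun i => f i x) sg ⟨n + 1, by omega⟩ :=
          tail_eq_one (fun i hi => (hiffA i).mpr (hgt i hi)) (by omega)
        have h2 : seq n (fun i => f i x) sg ⟨n + 1, by omega⟩ = 1 := seq_last rfl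
        rw [h2] at h1
        rw [h1] at hlt1
        exact absurd hlt1 (lt_irrefl _)
    obtain ⟨l, hcomp, hlB⟩ := exists_comparison (seq n (fun i => f i x) sg) (seq n (fun i => f i y) sg) hXm hYm
      (seq_zero rfl) (seq_last rfl) (seq_zero rfl) (seq_last rfl) hBA hstrict
    refine ⟨l, hcomp, fun i => ?_⟩
    have h1 := hlB ⟨((sg.symm i : Fin n) : ℕ) + 1, by have := (sg.symm i).isLt; omega⟩
    rwa [seq_index (fun i => f i y) sg i, seq_index (fun i => f i x) sg i] at h1
  · rintro ⟨l, ⟨hlm, hl0, hl1, t, hglb, hsm, himg⟩, hli⟩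
    have hlt1 : l t = 1 := by
      have h1 : (1 : I) ∈ l '' Set.Icc 0 t := by rw [himg]; trivial
      obtain ⟨s, hs, hs1⟩ := h1
      have : t ≤ s := hglb.1 (by simp [Set.mem_preimage, hs1])
      rw [← le_antisymm hs.2 this]
      exact hs1
    have hge1 : ∀ z : I, t ≤ z → l z = 1 := fun z h =>
      le_antisymm le_one' (hlt1 ▸ hlm h)
    have hlt_t : ∀ z : I, l z < 1 → z < t := by
      intro z h
      by_contra hcon
      rw [hge1 z (not_lt.mp hcon)] at h
      exact absurd h (lt_irrefl _)
    have hXY : seq n (fun i => f i x) s2 = fun j => l (seq n (fun i => f i y) s2 j) := by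
      funext j
      by_cases hz : (j : ℕ) = 0
      · rw [seq_zero hz, seq_zero hz, hl0]
      · by_cases htn : (j : ℕ) ≤ n
        · rw [seq_mid (by omega) htn, seq_mid (by omega) htn, hli]
        · have := j.isLt
          rw [seq_last (by omega), seq_last (by omega), hl1]
    have hXm2 : Monotone (seq n (fun i => f i x) s2) := by
      rw [hXY]; exact fun a b h => hlm (hY2 h)
    have hμcomp : μ ∘ ⇑s2 = μ ∘ ⇑s1 :=
      tie_transfer hX1 hμ1 hXm2 (fun i h => (hiff1 i).mpr h)
    have hμseq : seq n μ s2 = seq n μ s1 := seq_congr hμcomp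
    have hμm2 : Monotone (seq n μ s2) := by rw [hμseq]; exact hμ1
    have hXseq : seq n (fun i => f i x) s2 = seq n (fun i => f i x) s1 := seq_unique hXm2 hX1
    have hiffA2 : ∀ i : Fin (n + 1), (seq n μ s2 i.castSucc = seq n μ s2 i.succ ↔
        seq n (fun i => f i x) s2 i.castSucc = seq n (fun i => f i x) s2 i.succ) := by
      intro i
      rw [hXseq, hμseq]
      exact hiff1 i
    have hABj : ∀ j : Fin (n + 2), seq n (fun i => f i x) s2 j = l (seq n (fun i => f i y) s2 j) := fun j => congrFun hXY j
    have hS : (Finset.univ.filter (fun p : Fin (n + 2) => seq n (fun i => f i x) s2 p = 1)).Nonempty :=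
      ⟨⟨n + 1, by omega⟩, by
        simp only [Finset.mem_filter, Finset.mem_univ, true_and]
        exact seq_last rfl⟩
    obtain ⟨m0, hm0⟩ : ∃ m0 : Fin (n + 2),
        m0 = (Finset.univ.filter (fun p : Fin (n + 2) => seq n (fun i => f i x) s2 p = 1)).min' hS := ⟨_, rfl⟩
    have hm0mem : seq n (fun i => f i x) s2 m0 = 1 := by
      have := (Finset.univ.filter (fun p : Fin (n + 2) => seq n (fun i => f i x) s2 p = 1)).min'_mem hS
      rw [← hm0] at this
      simp only [Finset.mem_filter] at this
      exact this.2
    have hm0min : ∀ p : Fin (n + 2), p < m0 → seq n (fun i => f i x) s2 p < 1 := by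
      intro p hp
      rcases lt_or_eq_of_le (le_one' : seq n (fun i => f i x) s2 p ≤ 1) with h | h
      · exact h
      · exact absurd hp (not_lt.mpr (hm0 ▸ Finset.min'_le _ _ (by simp [h])))
    have hm0le : ∀ p : Fin (n + 2), m0 ≤ p → seq n (fun i => f i x) s2 p = 1 :=
      fun p h => le_antisymm le_one' (hm0mem ▸ hXm2 h)
    have hm0pos : 1 ≤ (m0 : ℕ) := by
      by_contra hcon
      have h0 : seq n (fun i => f i x) s2 m0 = 0 := seq_zero (by omega)
      rw [h0] at hm0mem
      exact absurd (congrArg Subtype.val hm0mem) (by norm_num)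
    have hm0n : (m0 : ℕ) ≤ n + 1 := by have := m0.isLt; omega
    refine ⟨s2, hμm2, hν2, (m0 : ℕ) - 1, by omega, ?_, ?_⟩
    · intro i hik
      rw [hiffA2 i, hiff2 i]
      have hclt : seq n (fun i => f i x) s2 i.castSucc < 1 := by
        apply hm0min
        rw [Fin.lt_def]
        have he : (i.castSucc : ℕ) = (i : ℕ) := rfl
        omega
      constructor
      · intro hAeq
        have hslt : seq n (fun i => f i x) s2 i.succ < 1 := hAeq ▸ hclt
        have hbc : seq n (fun i => f i y) s2 i.castSucc < t := hlt_t _ (by rw [← hABj]; exact hclt)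
        have hbs : seq n (fun i => f i y) s2 i.succ < t := hlt_t _ (by rw [← hABj]; exact hslt)
        apply hsm.injOn ⟨nonneg', le_of_lt hbc⟩ ⟨nonneg', le_of_lt hbs⟩
        rw [← hABj, ← hABj]
        exact hAeq
      · intro hBeq
        rw [hABj, hABj, hBeq]
    · intro i hik
      rw [hiffA2 i]
      have h1 : seq n (fun i => f i x) s2 i.castSucc = 1 := by
        apply hm0le
        rw [Fin.le_def]
        have he : (i.castSucc : ℕ) = (i : ℕ) := rfl
        omega
      have h2 : seq n (fun i => f i x) s2 i.succ = 1 := by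
        apply hm0le
        rw [Fin.le_def]
        have he : (i.succ : ℕ) = (i : ℕ) + 1 := rfl
        omega
      rw [h1, h2]
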